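/- Let p and q be relatively prime positive integers and let X be a p×q 0-1 matrix with at least two nonzero entries. Then the (p+q)×(p+q) block matrix B = [[C_p, X],[0, C_q]] satisfies: B^{pq} has an entry greater than 1; in particular B^{pq} is not a 0-1 matrix and θ(B) < pq. -/
import Mathlib


/-- A matrix over ℕ is a 0-1 matrix iff all its entries are at most 1. -/
def IsZO {α β : Type*} (A : Matrix α β ℕ) : Prop := ∀ i j, A i j ≤ 1

/-- The stable index of a 0-1 matrix: the smallest positive `k` with `A ^ (k+1)`
not a 0-1 matrix, or `⊤` if no such `k` exists. -/
noncomputable def theta {α : Type*} [Fintype α] [DecidableEq α]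
    (A : Matrix α α ℕ) : ℕ∞ :=
  sInf ((fun k : ℕ => (k : ℕ∞)) '' {k : ℕ | 1 ≤ k ∧ ¬ IsZO (A ^ (k + 1))})

/-- `g(n)` from the paper. -/
def g (n : ℕ) : ℕ :=
  if n % 2 = 1 then (n ^ 2 - 1) / 4
  else if n % 4 = 0 then (n ^ 2 - 4) / 4
  else (n ^ 2 - 16) / 4

/-- Basic circulant 0-1 matrix of order `n`. -/
def Cmat (n : ℕ) : Matrix (Fin n) (Fin n) ℕ :=
  Matrix.of fun i j => if (j : ℕ) = ((i : ℕ) + 1) % n then 1 else 0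

/-- Condition (★) on `(n, p, q)`. -/
def StarCond (n p q : ℕ) : Prop :=
  p + q = n ∧
  ((n % 2 = 1 ∧ ({p, q} : Finset ℕ) = {(n + 1) / 2, (n - 1) / 2}) ∨
   (n % 4 = 0 ∧ ({p, q} : Finset ℕ) = {(n + 2) / 2, (n - 2) / 2}) ∨
   (n % 4 = 2 ∧ ({p, q} : Finset ℕ) = {(n + 4) / 2, (n - 4) / 2}))

lemma Cpow (n m : ℕ) : ∀ i j : Fin n,
    ((Cmat n) ^ m) i j = if (j : ℕ) = ((i : ℕ) + m) % n then 1 else 0 := by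
  induction m with
  | zero =>
    intro i j
    simp [Matrix.one_apply, Nat.mod_eq_of_lt i.isLt, Fin.ext_iff, eq_comm]
  | succ m ih =>
    intro i j
    have hn : 0 < n := i.pos
    rw [pow_succ, Matrix.mul_apply]
    rw [Finset.sum_congr rfl (fun k _ => by rw [ih i k])]
    rw [show (∑ k : Fin n, (if (k : ℕ) = ((i : ℕ) + m) % n then 1 else 0) * Cmat n k j)
        = ∑ k : Fin n, (if k = (⟨((i : ℕ) + m) % n, Nat.mod_lt _ hn⟩ : Fin n) then Cmat n k j else 0) from
      Finset.sum_congr rfl (fun k _ => by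
        by_cases h : k = (⟨((i : ℕ) + m) % n, Nat.mod_lt _ hn⟩ : Fin n) <;>
          simp_all [Fin.ext_iff] )]
    rw [Finset.sum_ite_eq' Finset.univ]
    simp only [Finset.mem_univ, if_true, Cmat, Matrix.of_apply]
    rw [Nat.mod_add_mod]
    ring_nf

lemma blockpow {p q : ℕ} (A : Matrix (Fin p) (Fin p) ℕ) (X : Matrix (Fin p) (Fin q) ℕ)
    (D : Matrix (Fin q) (Fin q) ℕ) (k : ℕ) :
    (Matrix.fromBlocks A X 0 D) ^ k =
      Matrix.fromBlocks (A ^ k) (∑ i ∈ Finset.range k, A ^ i * X * D ^ (k - 1 - i)) 0 (D ^ k) := by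
  induction k with
  | zero => simp [Matrix.fromBlocks_one]
  | succ k ih =>
    rw [pow_succ', ih, Matrix.fromBlocks_multiply]
    simp only [Matrix.mul_zero, Matrix.zero_mul, add_zero, zero_add]
    have h2 : A * ∑ i ∈ Finset.range k, A ^ i * X * D ^ (k - 1 - i) + X * D ^ k
        = ∑ i ∈ Finset.range (k + 1), A ^ i * X * D ^ (k + 1 - 1 - i) := by
      rw [Matrix.mul_sum, Finset.sum_range_succ']
      simp only [pow_zero, one_mul, Nat.add_sub_cancel, Nat.sub_zero]
      rw [Matrix.one_mul]
      congr 1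
      refine Finset.sum_congr rfl fun i hi => ?_
      rw [← Matrix.mul_assoc, ← Matrix.mul_assoc, ← pow_succ']
      congr 2
      omega
    rw [h2, ← pow_succ', ← pow_succ']

lemma term_ge {p q : ℕ} (hp : 0 < p) (hq : 0 < q) (X : Matrix (Fin p) (Fin q) ℕ)
    (r : Fin p) (s : Fin q) (i j : ℕ) (hip : i % p = (r : ℕ))
    (hsj : ((s : ℕ) + j) % q = 0) :
    X r s ≤ (Cmat p ^ i * X * Cmat q ^ j) ⟨0, hp⟩ ⟨0, hq⟩ := by
  have h1 : (Cmat p ^ i) ⟨0, hp⟩ r = 1 := by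
    rw [Cpow]; simp [hip]
  have h2 : (Cmat q ^ j) s ⟨0, hq⟩ = 1 := by
    rw [Cpow]; simp [hsj]
  have inner : (Cmat p ^ i) ⟨0, hp⟩ r * X r s ≤ (Cmat p ^ i * X) ⟨0, hp⟩ s := by
    rw [Matrix.mul_apply]
    exact Finset.single_le_sum
      (f := fun r' => (Cmat p ^ i) ⟨0, hp⟩ r' * X r' s)
      (fun _ _ => Nat.zero_le _) (Finset.mem_univ r)
  have outer : (Cmat p ^ i * X) ⟨0, hp⟩ s * (Cmat q ^ j) s ⟨0, hq⟩
      ≤ (Cmat p ^ i * X * Cmat q ^ j) ⟨0, hp⟩ ⟨0, hq⟩ := by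
    conv_rhs => rw [Matrix.mul_apply]
    exact Finset.single_le_sum
      (f := fun s' => (Cmat p ^ i * X) ⟨0, hp⟩ s' * (Cmat q ^ j) s' ⟨0, hq⟩)
      (fun _ _ => Nat.zero_le _) (Finset.mem_univ s)
  calc X r s = (Cmat p ^ i) ⟨0, hp⟩ r * X r s * (Cmat q ^ j) s ⟨0, hq⟩ := by
        rw [h1, h2]; ring
    _ ≤ (Cmat p ^ i * X) ⟨0, hp⟩ s * (Cmat q ^ j) s ⟨0, hq⟩ :=
        Nat.mul_le_mul_right _ inner
    _ ≤ _ := outer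

lemma idx_spec {p q : ℕ} (hp : 0 < p) (hq : 0 < q) (hpq : Nat.Coprime p q)
    (r : Fin p) (s : Fin q) :
    ∃ i < p * q, i % p = (r : ℕ) ∧ (i + 1) % q = (s : ℕ) ∧
      ((s : ℕ) + (p * q - 1 - i)) % q = 0 := by
  set k := ((Nat.chineseRemainder hpq (r : ℕ) ((s : ℕ) + q - 1)) : ℕ) with hkdef
  obtain ⟨hk1, hk2⟩ := (Nat.chineseRemainder hpq (r : ℕ) ((s : ℕ) + q - 1)).2
  set i := k % (p * q) with hi
  have hilt : i < p * q := Nat.mod_lt _ (Nat.mul_pos hp hq)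
  have hip : i % p = (r : ℕ) := by
    rw [hi, Nat.mod_mod_of_dvd k (dvd_mul_right p q)]
    rw [show k % p = (r : ℕ) % p from hk1]
    exact Nat.mod_eq_of_lt r.isLt
  have hiq : i % q = ((s : ℕ) + q - 1) % q := by
    rw [hi, Nat.mod_mod_of_dvd k (dvd_mul_left q p)]
    exact hk2
  have h3 : (i + 1) ≡ (s : ℕ) [MOD q] := by
    have h2 : i + 1 ≡ (s : ℕ) + q [MOD q] := by
      have := (Nat.ModEq.add_right 1 (hiq : i ≡ (s : ℕ) + q - 1 [MOD q]))
      rwa [Nat.sub_add_cancel (by omega)] at this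
    exact h2.trans (Nat.add_mod_right (s : ℕ) q)
  refine ⟨i, hilt, hip, ?_, ?_⟩
  · rw [h3]; exact Nat.mod_eq_of_lt s.isLt
  · have key : (s : ℕ) + (p * q - 1 - i) + (i + 1) = (s : ℕ) + p * q := by omega
    have e : (s : ℕ) + (p * q - 1 - i) + (i + 1) ≡ 0 + (i + 1) [MOD q] := by
      rw [key, zero_add]
      calc (s : ℕ) + p * q ≡ (s : ℕ) + 0 [MOD q] :=
            Nat.ModEq.add_left _ ((Nat.modEq_zero_iff_dvd).2 ⟨p, mul_comm p q⟩)
        _ = (s : ℕ) := by ring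
        _ ≡ i + 1 [MOD q] := h3.symm
    have := Nat.ModEq.add_right_cancel' (i + 1) e
    simpa [Nat.ModEq] using this

theorem stmt_14 (p q : ℕ) (hp : 0 < p) (hq : 0 < q) (hpq : Nat.Coprime p q)
    (X : Matrix (Fin p) (Fin q) ℕ) (hX : IsZO X)
    (htwo : ∃ ij kl : Fin p × Fin q, ij ≠ kl ∧
      X ij.1 ij.2 ≠ 0 ∧ X kl.1 kl.2 ≠ 0) :
    (∃ i j, 1 < ((Matrix.fromBlocks (Cmat p) X 0 (Cmat q)) ^ (p * q)) i j) ∧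
    ¬ IsZO ((Matrix.fromBlocks (Cmat p) X 0 (Cmat q)) ^ (p * q)) ∧
    theta (Matrix.fromBlocks (Cmat p) X 0 (Cmat q)) < (p * q : ℕ∞) := by
  obtain ⟨ij, kl, hne, hij, hkl⟩ := htwo
  obtain ⟨i1, hi1lt, hi1p, hi1q, hi1j⟩ := idx_spec hp hq hpq ij.1 ij.2
  obtain ⟨i2, hi2lt, hi2p, hi2q, hi2j⟩ := idx_spec hp hq hpq kl.1 kl.2
  have hii : i1 ≠ i2 := by
    intro h
    apply hne
    apply Prod.ext
    · apply Fin.ext; rw [← hi1p, ← hi2p, h]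
    · apply Fin.ext; rw [← hi1q, ← hi2q, h]
  set a : Fin p := ⟨0, hp⟩
  set b : Fin q := ⟨0, hq⟩
  have hterm1 : X ij.1 ij.2 ≤ (Cmat p ^ i1 * X * Cmat q ^ (p * q - 1 - i1)) a b :=
    term_ge hp hq X ij.1 ij.2 i1 _ hi1p hi1j
  have hterm2 : X kl.1 kl.2 ≤ (Cmat p ^ i2 * X * Cmat q ^ (p * q - 1 - i2)) a b :=
    term_ge hp hq X kl.1 kl.2 i2 _ hi2p hi2j
  have hY : 2 ≤ (∑ i ∈ Finset.range (p * q),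
      Cmat p ^ i * X * Cmat q ^ (p * q - 1 - i)) a b := by
    rw [Matrix.sum_apply]
    have hsub : ({i1, i2} : Finset ℕ) ⊆ Finset.range (p * q) := by
      intro x hx
      simp only [Finset.mem_insert, Finset.mem_singleton] at hx
      rcases hx with h | h <;> simp [h, Finset.mem_range, hi1lt, hi2lt]
    calc (2 : ℕ) ≤ X ij.1 ij.2 + X kl.1 kl.2 := by omega
      _ ≤ (Cmat p ^ i1 * X * Cmat q ^ (p * q - 1 - i1)) a b
          + (Cmat p ^ i2 * X * Cmat q ^ (p * q - 1 - i2)) a b :=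
          add_le_add hterm1 hterm2
      _ = ∑ i ∈ ({i1, i2} : Finset ℕ),
            (Cmat p ^ i * X * Cmat q ^ (p * q - 1 - i)) a b :=
          (Finset.sum_pair (f := fun i => (Cmat p ^ i * X * Cmat q ^ (p * q - 1 - i)) a b) hii).symm
      _ ≤ _ := Finset.sum_le_sum_of_subset hsub
  have hentry : 1 < ((Matrix.fromBlocks (Cmat p) X 0 (Cmat q)) ^ (p * q))
      (Sum.inl a) (Sum.inr b) := by
    rw [blockpow, Matrix.fromBlocks_apply₁₂]
    omega
  have hnotZO : ¬ IsZO ((Matrix.fromBlocks (Cmat p) X 0 (Cmat q)) ^ (p * q)) := by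
    intro h
    exact absurd (h (Sum.inl a) (Sum.inr b)) (by omega)
  refine ⟨⟨Sum.inl a, Sum.inr b, hentry⟩, hnotZO, ?_⟩
  have hpq2 : 2 ≤ p * q := by
    rcases Nat.lt_or_ge (p * q) 2 with h | h
    · exfalso
      have h1 : p * q = 1 := by
        have := Nat.mul_pos hp hq; omega
      have hp1 : p = 1 := Nat.eq_one_of_mul_eq_one_right h1
      have hq1 : q = 1 := Nat.eq_one_of_mul_eq_one_left h1
      subst hp1; subst hq1
      exact hne (Subsingleton.elim _ _)
    · exact h
  have hmem : ((p * q - 1 : ℕ) : ℕ∞) ∈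
      ((fun k : ℕ => (k : ℕ∞)) '' {k : ℕ | 1 ≤ k ∧ ¬ IsZO
        ((Matrix.fromBlocks (Cmat p) X 0 (Cmat q)) ^ (k + 1))}) := by
    refine ⟨p * q - 1, ⟨by omega, ?_⟩, rfl⟩
    rw [show p * q - 1 + 1 = p * q by omega]
    exact hnotZO
  calc theta (Matrix.fromBlocks (Cmat p) X 0 (Cmat q)) ≤ ((p * q - 1 : ℕ) : ℕ∞) :=
        sInf_le hmem
    _ < (p * q : ℕ∞) := by
        have : ((p * q - 1 : ℕ) : ℕ∞) < ((p * q : ℕ) : ℕ∞) := by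
          exact_mod_cast (show p * q - 1 < p * q by omega)
        simpa using this
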